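/- The linear span of the exponential functions s ↦ e^{−sλ}, λ > 0, is dense in L¹(0,∞). -/

import Mathlib

open MeasureTheory

lemma span_mem_integrable {g : ℝ → ℂ}
    (hg : g ∈ Submodule.span ℂ
      {h : ℝ → ℂ | ∃ l : ℝ, 0 < l ∧ h = fun s : ℝ => Complex.exp (-(s * l : ℝ))}) :
    IntegrableOn g (Set.Ioi 0) := by
  induction hg using Submodule.span_induction with
  | mem h hh =>
    obtain ⟨l, hl, rfl⟩ := hh
    have h1 : IntegrableOn (fun s : ℝ => Real.exp (-(s * l))) (Set.Ioi 0) := by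
      have := exp_neg_integrableOn_Ioi 0 hl
      simpa [neg_mul, mul_comm] using this
    have h2 : Integrable (fun s : ℝ => ((Real.exp (-(s * l)) : ℝ) : ℂ)) (volume.restrict (Set.Ioi 0)) := h1.ofReal
    have heq : (fun s : ℝ => Complex.exp (-(s * l : ℝ)))
        = fun s : ℝ => ((Real.exp (-(s * l)) : ℝ) : ℂ) := by
      funext s; rw [Complex.ofReal_exp]; push_cast; ring_nf
    rw [heq]; exact h2
  | zero => exact integrable_zero _ _ _
  | add a b _ _ ha hb => exact ha.add hb
  | smul c a _ ha => exact ha.smul c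

lemma weierstrass_complex (H : ℝ → ℂ) (hH : Continuous H) {ε : ℝ} (hε : 0 < ε) :
    ∃ p : Polynomial ℂ, ∀ x ∈ Set.Icc (0:ℝ) 1, ‖H x - p.eval (x : ℂ)‖ < ε := by
  set u : C(Set.Icc (0:ℝ) 1, ℝ) := ⟨fun x => (H x).re, by fun_prop⟩
  set v : C(Set.Icc (0:ℝ) 1, ℝ) := ⟨fun x => (H x).im, by fun_prop⟩
  obtain ⟨P, hP⟩ := exists_polynomial_near_continuousMap 0 1 u (ε/2) (by linarith)
  obtain ⟨Q, hQ⟩ := exists_polynomial_near_continuousMap 0 1 v (ε/2) (by linarith)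
  refine ⟨P.map (algebraMap ℝ ℂ) + Polynomial.C Complex.I * Q.map (algebraMap ℝ ℂ), ?_⟩
  intro x hx
  have hPx : |P.eval x - (H x).re| < ε/2 := by
    have := (ContinuousMap.norm_lt_iff _ (by linarith)).mp hP ⟨x, hx⟩
    simpa [u] using this
  have hQx : |Q.eval x - (H x).im| < ε/2 := by
    have := (ContinuousMap.norm_lt_iff _ (by linarith)).mp hQ ⟨x, hx⟩
    simpa [v] using this
  have heval : ((P.map (algebraMap ℝ ℂ) + Polynomial.C Complex.I * Q.map (algebraMap ℝ ℂ)).eval (x:ℂ))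
      = ((P.eval x : ℝ) : ℂ) + Complex.I * ((Q.eval x : ℝ) : ℂ) := by
    simp only [Polynomial.eval_add, Polynomial.eval_mul, Polynomial.eval_C, Polynomial.eval_map,
      show ((x:ℝ) : ℂ) = algebraMap ℝ ℂ x from rfl, Polynomial.eval₂_at_apply]
    rfl
  rw [heval]
  have hre : H x = ((H x).re : ℂ) + Complex.I * ((H x).im : ℂ) := by
    simp [Complex.ext_iff]
  calc ‖H x - (((P.eval x : ℝ) : ℂ) + Complex.I * ((Q.eval x : ℝ) : ℂ))‖
      = ‖(((H x).re - P.eval x : ℝ) : ℂ) + Complex.I * (((H x).im - Q.eval x : ℝ) : ℂ)‖ := by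
        congr 1; simp [Complex.ext_iff]
    _ ≤ ‖(((H x).re - P.eval x : ℝ) : ℂ)‖ + ‖Complex.I * (((H x).im - Q.eval x : ℝ) : ℂ)‖ :=
        norm_add_le _ _
    _ < ε := by
        rw [norm_mul, Complex.norm_I, one_mul]
        simp only [Complex.norm_real, Real.norm_eq_abs]
        rw [abs_sub_comm ((H x).re)] at *
        rw [abs_sub_comm ((H x).im)] at *
        linarith

lemma approx_cont_compact (f₀ : ℝ → ℂ) (hcont : Continuous f₀) (hcs : HasCompactSupport f₀)
    {ε : ℝ} (hε : 0 < ε) :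
    ∃ g ∈ Submodule.span ℂ
        {h : ℝ → ℂ | ∃ l : ℝ, 0 < l ∧ h = fun s : ℝ => Complex.exp (-(s * l : ℝ))},
      ∫ s in Set.Ioi (0 : ℝ), ‖f₀ s - g s‖ ≤ ε := by
  -- support bound
  obtain ⟨R, hR⟩ := (hcs.isBounded).subset_closedBall 0
  have hzero : ∀ s : ℝ, R < s → f₀ s = 0 := by
    intro s hs
    apply image_eq_zero_of_notMem_tsupport
    intro hmem
    have := hR hmem
    rw [Real.closedBall_eq_Icc] at this
    have := this.2
    linarith [this]
  set r : ℝ := Real.exp (-R) with hr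
  have hrpos : 0 < r := Real.exp_pos _
  -- the transferred function
  set H : ℝ → ℂ := fun x => if 0 < x then (x : ℂ)⁻¹ * f₀ (-Real.log x) else 0 with hHdef
  have hH0 : ∀ x : ℝ, x < r → H x = 0 := by
    intro x hx
    by_cases hx0 : 0 < x
    · have hlog : R < -Real.log x := by
        have : Real.log x < -R := (Real.log_lt_iff_lt_exp hx0).mpr (by simpa [hr] using hx)
        linarith
      simp only [hHdef, if_pos hx0, hzero _ hlog, mul_zero]
    · simp [hHdef, if_neg hx0]
  have hHcont : Continuous H := by
    rw [continuous_iff_continuousAt]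
    intro x
    rcases lt_or_ge x r with hx | hx
    · have hev : H =ᶠ[nhds x] fun _ => (0 : ℂ) :=
        Filter.eventually_of_mem (Iio_mem_nhds hx) (fun y hy => hH0 y hy)
      exact ContinuousAt.congr continuousAt_const hev.symm
    · have hx0 : 0 < x := lt_of_lt_of_le hrpos hx
      have hev : H =ᶠ[nhds x] fun y => (y : ℂ)⁻¹ * f₀ (-Real.log y) :=
        Filter.eventually_of_mem (Ioi_mem_nhds hx0) (fun y hy => by
          simp only [hHdef, if_pos (Set.mem_Ioi.mp hy)])
      refine ContinuousAt.congr ?_ hev.symm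
      refine ContinuousAt.mul (ContinuousAt.inv₀ Complex.continuous_ofReal.continuousAt ?_) ?_
      · exact_mod_cast ne_of_gt hx0
      · exact hcont.continuousAt.comp ((Real.continuousAt_log (ne_of_gt hx0)).neg)
  -- Weierstrass
  obtain ⟨p, hp⟩ := weierstrass_complex H hHcont hε
  -- the approximant
  set g : ℝ → ℂ :=
    ∑ k ∈ p.support, p.coeff k • (fun s : ℝ => Complex.exp (-(s * ((k : ℝ) + 1) : ℝ))) with hgdef
  refine ⟨g, ?_, ?_⟩
  · apply Submodule.sum_mem
    intro k _
    exact Submodule.smul_mem _ _ (Submodule.subset_span ⟨(k : ℝ) + 1, by positivity, rfl⟩)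
  -- evaluation of g
  have hkey : ∀ (s : ℝ) (k : ℕ),
      Complex.exp (-(s * ((k : ℝ) + 1) : ℝ))
        = ((Real.exp (-s) : ℝ) : ℂ) * ((Real.exp (-s) : ℝ) : ℂ) ^ k := by
    intro s k
    rw [← Complex.ofReal_pow, ← Real.exp_nat_mul, ← Complex.ofReal_mul, ← Real.exp_add,
      ← Complex.ofReal_neg, ← Complex.ofReal_exp]
    congr 1
    ring
  have hgeval : ∀ s : ℝ,
      g s = ((Real.exp (-s) : ℝ) : ℂ) * p.eval ((Real.exp (-s) : ℝ) : ℂ) := by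
    intro s
    rw [hgdef, Finset.sum_apply, Polynomial.eval_eq_sum, Polynomial.sum_def, Finset.mul_sum]
    refine Finset.sum_congr rfl fun k _ => ?_
    simp only [Pi.smul_apply, smul_eq_mul, hkey s k]
    ring
  -- pointwise bound
  have hpt : ∀ s ∈ Set.Ioi (0:ℝ), ‖f₀ s - g s‖ ≤ ε * Real.exp (-s) := by
    intro s hs
    have hs0 : (0:ℝ) < s := hs
    have hxpos : 0 < Real.exp (-s) := Real.exp_pos _
    have hxle : Real.exp (-s) ≤ 1 := by
      rw [show (1:ℝ) = Real.exp 0 by simp]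
      exact Real.exp_le_exp.mpr (by linarith)
    have hf₀s : f₀ s = ((Real.exp (-s) : ℝ) : ℂ) * H (Real.exp (-s)) := by
      simp only [hHdef, if_pos hxpos, Real.log_exp, neg_neg]
      rw [← mul_assoc, mul_inv_cancel₀ (by exact_mod_cast ne_of_gt hxpos), one_mul]
    have : f₀ s - g s
        = ((Real.exp (-s) : ℝ) : ℂ) * (H (Real.exp (-s)) - p.eval ((Real.exp (-s) : ℝ) : ℂ)) := by
      rw [hf₀s, hgeval]; ring
    rw [this, norm_mul, Complex.norm_real, Real.norm_eq_abs, abs_of_pos hxpos]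
    rw [mul_comm ε]
    exact mul_le_mul_of_nonneg_left
      (le_of_lt (hp _ ⟨le_of_lt hxpos, hxle⟩)) (le_of_lt hxpos)
  -- integrability
  have hgint : IntegrableOn g (Set.Ioi 0) := by
    have hgfun : g = fun s => ∑ k ∈ p.support,
        p.coeff k • Complex.exp (-(s * ((k : ℝ) + 1) : ℝ)) := by
      funext s; simp [hgdef, Finset.sum_apply]
    rw [hgfun]
    apply integrable_finset_sum
    intro k _
    have h1 : IntegrableOn (fun s : ℝ => Real.exp (-(s * ((k:ℝ)+1)))) (Set.Ioi 0) := by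
      have h0 := exp_neg_integrableOn_Ioi 0 (show (0:ℝ) < (k:ℝ)+1 by positivity)
      rw [show (fun s : ℝ => Real.exp (-(s * ((k:ℝ)+1)))) = (fun x : ℝ => Real.exp (-((k:ℝ)+1) * x))
        from funext fun x => by ring_nf]
      exact h0
    have heq : (fun s : ℝ => Complex.exp (-(s * ((k:ℝ)+1) : ℝ)))
        = fun s : ℝ => ((Real.exp (-(s * ((k:ℝ)+1))) : ℝ) : ℂ) := by
      funext s; rw [Complex.ofReal_exp]; push_cast; ring_nf
    have h2 : Integrable (fun s : ℝ => Complex.exp (-(s * ((k:ℝ)+1) : ℝ)))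
        (volume.restrict (Set.Ioi 0)) := by rw [heq]; exact h1.ofReal
    exact h2.smul (p.coeff k)
  have hf₀int : IntegrableOn f₀ (Set.Ioi 0) :=
    (hcont.integrable_of_hasCompactSupport hcs).integrableOn
  have hmaj : IntegrableOn (fun s : ℝ => ε * Real.exp (-s)) (Set.Ioi 0) := by
    have := exp_neg_integrableOn_Ioi 0 (zero_lt_one : (0:ℝ) < 1)
    have h := this.const_mul ε
    simp only [neg_mul, one_mul] at h
    exact h
  calc ∫ s in Set.Ioi (0:ℝ), ‖f₀ s - g s‖
      ≤ ∫ s in Set.Ioi (0:ℝ), ε * Real.exp (-s) := by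
        apply setIntegral_mono_on ((hf₀int.sub hgint).norm) hmaj measurableSet_Ioi hpt
    _ = ε := by
        rw [integral_const_mul, integral_exp_neg_Ioi_zero, mul_one]

/-- The linear span of the exponential functions `s ↦ e^{−sλ}`, `λ > 0`, is
dense in `L¹(0,∞)`: every integrable function on `(0,∞)` can be approximated in the `L¹`
norm by elements of this span. -/
theorem span_exponentials_dense_L1 :
    ∀ f : ℝ → ℂ, IntegrableOn f (Set.Ioi 0) →
      ∀ δ : ℝ, 0 < δ →
        ∃ g ∈ Submodule.span ℂ
            {h : ℝ → ℂ | ∃ l : ℝ, 0 < l ∧ h = fun s : ℝ => Complex.exp (-(s * l : ℝ))},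
          ∫ s in Set.Ioi (0 : ℝ), ‖f s - g s‖ < δ := by
  intro f hf δ hδ
  set F : ℝ → ℂ := (Set.Ioi 0).indicator f with hFdef
  have hF : Integrable F := (integrable_indicator_iff measurableSet_Ioi).mpr hf
  obtain ⟨f₀, hcs, hint, hcont, hf₀intR⟩ :=
    hF.exists_hasCompactSupport_integral_sub_le (show (0:ℝ) < δ/4 by linarith)
  obtain ⟨g, hgspan, hgapprox⟩ :=
    approx_cont_compact f₀ hcont hcs (show (0:ℝ) < δ/4 by linarith)
  refine ⟨g, hgspan, ?_⟩
  have hgint : IntegrableOn g (Set.Ioi 0) := span_mem_integrable hgspan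
  have hf₀int : IntegrableOn f₀ (Set.Ioi 0) := hf₀intR.integrableOn
  -- step 1 : ∫_{Ioi 0} ‖f - f₀‖ ≤ δ/4
  have step1 : ∫ s in Set.Ioi (0:ℝ), ‖f s - f₀ s‖ ≤ δ/4 := by
    have heq : ∫ s in Set.Ioi (0:ℝ), ‖f s - f₀ s‖ = ∫ s in Set.Ioi (0:ℝ), ‖F s - f₀ s‖ := by
      apply setIntegral_congr_fun measurableSet_Ioi
      intro s hs
      simp [hFdef, Set.indicator_of_mem hs]
    rw [heq]
    calc ∫ s in Set.Ioi (0:ℝ), ‖F s - f₀ s‖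
        ≤ ∫ s, ‖F s - f₀ s‖ := by
          apply setIntegral_le_integral ((hF.sub hf₀intR).norm)
          filter_upwards with s using norm_nonneg _
      _ ≤ δ/4 := hint
  -- triangle inequality
  have htri : ∫ s in Set.Ioi (0:ℝ), ‖f s - g s‖
      ≤ (∫ s in Set.Ioi (0:ℝ), ‖f s - f₀ s‖) + ∫ s in Set.Ioi (0:ℝ), ‖f₀ s - g s‖ := by
    have h1 : Integrable (fun s : ℝ => ‖f s - f₀ s‖) (volume.restrict (Set.Ioi 0)) :=
      (hf.sub hf₀int).norm
    have h2 : Integrable (fun s : ℝ => ‖f₀ s - g s‖) (volume.restrict (Set.Ioi 0)) :=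
      (hf₀int.sub hgint).norm
    have h3 : Integrable (fun s : ℝ => ‖f s - g s‖) (volume.restrict (Set.Ioi 0)) :=
      (hf.sub hgint).norm
    calc ∫ s in Set.Ioi (0:ℝ), ‖f s - g s‖
        ≤ ∫ s in Set.Ioi (0:ℝ), (‖f s - f₀ s‖ + ‖f₀ s - g s‖) := by
          apply integral_mono h3 (h1.add h2)
          intro s
          calc ‖f s - g s‖ = ‖(f s - f₀ s) + (f₀ s - g s)‖ := by ring_nf
            _ ≤ ‖f s - f₀ s‖ + ‖f₀ s - g s‖ := norm_add_le _ _
      _ = (∫ s in Set.Ioi (0:ℝ), ‖f s - f₀ s‖) + ∫ s in Set.Ioi (0:ℝ), ‖f₀ s - g s‖ :=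
          integral_add h1 h2
  linarith
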